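/- Define rational numbers C_p by C_0 = 1 and Σ_{q=0}^p C_{p−q}/(2q+1)! = 0 for p ≥ 1. Then for all p ≥ 1, Σ_{q=0}^p C_{p−q}/(2q)! = C_p/(2^{1−2p} − 1). -/

import Mathlib

open Finset


-- even/odd split of a sum over range (2n)
lemma sum_range_even_odd (f : ℕ → ℕ) (n : ℕ) :
    ∑ k ∈ range (2*n), f k = ∑ i ∈ range n, f (2*i) + ∑ i ∈ range n, f (2*i+1) := by
  induction n with
  | zero => simp
  | succ n ih =>
    have h : 2*(n+1) = (2*n)+1+1 := by ring
    rw [h, sum_range_succ, sum_range_succ, ih, sum_range_succ, sum_range_succ]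
    ring

lemma odd_choose (q : ℕ) :
    ∑ i ∈ range (q+1), (2*q+1).choose (2*i+1) = 4^q := by
  have he : ∑ i ∈ range (q+1), (2*q+1).choose (2*i)
      = ∑ i ∈ range (q+1), (2*q+1).choose (2*i+1) := by
    rw [← sum_range_reflect (fun i => (2*q+1).choose (2*i+1)) (q+1)]
    apply sum_congr rfl
    intro i hi
    have hi' : i ≤ q := by simpa [Nat.lt_succ] using hi
    have h1 : 2*i = 2*q+1 - (2*(q+1-1-i)+1) := by omega
    rw [h1, Nat.choose_symm (by omega)]
  have total : ∑ k ∈ range (2*(q+1)), (2*q+1).choose k = 2^(2*q+1) := by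
    have := Nat.sum_range_choose (2*q+1)
    rw [show 2*(q+1) = 2*q+1+1 by ring]
    exact this
  rw [sum_range_even_odd] at total
  rw [he] at total
  have hp : 2^(2*q+1) = 2 * 4^q := by
    rw [pow_succ, pow_mul]; ring
  set t := ∑ i ∈ range (q+1), (2*q+1).choose (2*i+1) with ht
  set u := (4:ℕ)^q with hu
  omega

lemma even_choose_odd (q : ℕ) :
    ∑ i ∈ range (q+1), (2*q+1).choose (2*i) = 4^q := by
  have he : ∑ i ∈ range (q+1), (2*q+1).choose (2*i)
      = ∑ i ∈ range (q+1), (2*q+1).choose (2*i+1) := by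
    rw [← sum_range_reflect (fun i => (2*q+1).choose (2*i+1)) (q+1)]
    apply sum_congr rfl
    intro i hi
    have hi' : i ≤ q := by simpa [Nat.lt_succ] using hi
    have h1 : 2*i = 2*q+1 - (2*(q+1-1-i)+1) := by omega
    rw [h1, Nat.choose_symm (by omega)]
  rw [he, odd_choose]

lemma even_choose (p : ℕ) (hp : 1 ≤ p) :
    2 * ∑ j ∈ range (p+1), (2*p).choose (2*j) = 4^p := by
  obtain ⟨q, rfl⟩ : ∃ q, p = q+1 := ⟨p-1, by omega⟩
  have hb : ∑ j ∈ range (q+1+1), (2*(q+1)).choose (2*j) = 2 * 4^q := by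
    rw [sum_range_succ']
    have step : ∀ i ∈ range (q+1), (2*(q+1)).choose (2*(i+1))
        = (2*q+1).choose (2*i+1) + (2*q+1).choose (2*i+2) := by
      intro i _
      have h : 2*(q+1) = (2*q+1)+1 := by ring
      have h2 : 2*(i+1) = (2*i+1)+1 := by ring
      rw [h, h2, Nat.choose_succ_succ]
    rw [sum_congr rfl step, sum_add_distrib, odd_choose]
    have htail : ∑ i ∈ range (q+1), (2*q+1).choose (2*i+2) = 4^q - 1 := by
      have he := even_choose_odd q
      rw [sum_range_succ'] at he
      simp only [Nat.mul_zero, Nat.choose_zero_right] at he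
      -- he : ∑ i ∈ range q, (2*q+1).choose (2*(i+1)) + 1 = 4^q
      have hext : ∑ i ∈ range (q+1), (2*q+1).choose (2*i+2)
          = ∑ i ∈ range q, (2*q+1).choose (2*(i+1)) := by
        rw [sum_range_succ]
        have : (2*q+1).choose (2*q+2) = 0 := Nat.choose_eq_zero_of_lt (by omega)
        rw [this]
        simp only [add_zero]
        apply sum_congr rfl
        intro i _
        rw [show 2*(i+1) = 2*i+2 from by ring]
      omega
    rw [htail]
    have h4 : 1 ≤ 4^q := Nat.one_le_pow _ _ (by norm_num)
    norm_num
    omega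
  rw [hb]
  rw [show 4^(q+1) = 4 * 4^q by rw [pow_succ]; ring]
  ring

noncomputable def sOdd (q : ℕ) : ℚ := 1 / (Nat.factorial (2*q+1) : ℚ)
noncomputable def cEven (q : ℕ) : ℚ := 1 / (Nat.factorial (2*q) : ℚ)

lemma fact_ne (n : ℕ) : ((Nat.factorial n : ℚ)) ≠ 0 := by
  exact_mod_cast Nat.factorial_ne_zero n

-- triangle swap
lemma tri_swap (f : ℕ → ℕ → ℚ) (n : ℕ) :
    ∑ q ∈ range (n+1), ∑ j ∈ range (n-q+1), f q j
      = ∑ j ∈ range (n+1), ∑ q ∈ range (n-j+1), f q j := by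
  apply Finset.sum_comm'
  intro x y
  simp only [mem_range]
  omega

-- reflect helper
lemma reflect_sum (g : ℕ → ℚ) (n : ℕ) :
    ∑ j ∈ range (n+1), g (n - j) = ∑ j ∈ range (n+1), g j := by
  have := Finset.sum_range_reflect g (n+1)
  simpa using this

lemma N1 (r : ℕ) : (4:ℚ)^r * sOdd r = ∑ j ∈ range (r+1), cEven j * sOdd (r-j) := by
  have key : ∀ j ∈ range (r+1), cEven j * sOdd (r-j)
      = ((2*r+1).choose (2*j) : ℚ) / (Nat.factorial (2*r+1) : ℚ) := by
    intro j hj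
    have hj' : j ≤ r := by simpa [Nat.lt_succ] using (mem_range.mp hj)
    have h := Nat.add_choose_mul_factorial_mul_factorial (2*(r-j)+1) (2*j)
    have hs : 2*(r-j)+1 + 2*j = 2*r+1 := by omega
    rw [hs] at h
    have hq : ((2*r+1).choose (2*j) : ℚ) * (Nat.factorial (2*(r-j)+1) : ℚ)
        * (Nat.factorial (2*j) : ℚ) = (Nat.factorial (2*r+1) : ℚ) := by
      exact_mod_cast h
    simp only [cEven, sOdd]
    field_simp
    linarith [hq]
  rw [sum_congr rfl key, ← Finset.sum_div]
  have h2 : (∑ j ∈ range (r+1), ((2*r+1).choose (2*j) : ℚ)) = 4^r := by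
    have := congrArg (Nat.cast : ℕ → ℚ) (even_choose_odd r)
    push_cast at this
    exact this
  rw [h2]
  simp only [sOdd]
  ring

lemma N2 (p : ℕ) (hp : 1 ≤ p) :
    ∑ j ∈ range (p+1), cEven j * cEven (p-j) = (4:ℚ)^p / 2 * cEven p := by
  have key : ∀ j ∈ range (p+1), cEven j * cEven (p-j)
      = ((2*p).choose (2*j) : ℚ) / (Nat.factorial (2*p) : ℚ) := by
    intro j hj
    have hj' : j ≤ p := by simpa [Nat.lt_succ] using (mem_range.mp hj)
    have h := Nat.add_choose_mul_factorial_mul_factorial (2*(p-j)) (2*j)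
    have hs : 2*(p-j) + 2*j = 2*p := by omega
    rw [hs] at h
    have hq : ((2*p).choose (2*j) : ℚ) * (Nat.factorial (2*(p-j)) : ℚ)
        * (Nat.factorial (2*j) : ℚ) = (Nat.factorial (2*p) : ℚ) := by
      exact_mod_cast h
    simp only [cEven]
    field_simp
    linarith [hq]
  rw [sum_congr rfl key, ← Finset.sum_div]
  have h2 : (∑ j ∈ range (p+1), ((2*p).choose (2*j) : ℚ)) = (4:ℚ)^p / 2 := by
    have := congrArg (Nat.cast : ℕ → ℚ) (even_choose p hp)
    push_cast at this
    linarith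
  rw [h2]
  simp only [cEven]
  ring


noncomputable def SS (C : ℕ → ℚ) (m : ℕ) : ℚ := ∑ j ∈ range (m+1), C (m-j) * cEven j

lemma lemK (C : ℕ → ℚ) (hC0 : C 0 = 1)
    (hCrec : ∀ p : ℕ, 1 ≤ p → ∑ q ∈ Finset.range (p + 1), C (p - q) / (Nat.factorial (2 * q + 1) : ℚ) = 0) (m : ℕ) : ∑ q ∈ range (m+1), C (m-q) * sOdd q = if m = 0 then 1 else 0 := by
  rcases Nat.eq_zero_or_pos m with h|h
  · subst h; simp [sOdd, hC0, Nat.factorial]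
  · rw [if_neg (by omega)]
    rw [← hCrec m h]
    apply sum_congr rfl
    intro q _
    simp [sOdd, div_eq_mul_inv]

lemma lemL3 (C : ℕ → ℚ) (hC0 : C 0 = 1)
    (hCrec : ∀ p : ℕ, 1 ≤ p → ∑ q ∈ Finset.range (p + 1), C (p - q) / (Nat.factorial (2 * q + 1) : ℚ) = 0) (m : ℕ) : ∑ q ∈ range (m+1), C (m-q) * ((4:ℚ)^q * sOdd q) = cEven m := by
  rw [← reflect_sum (fun q => C (m-q) * ((4:ℚ)^q * sOdd q)) m]
  have step1 : ∀ q ∈ range (m+1),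
      C (m-(m-q)) * ((4:ℚ)^(m-q) * sOdd (m-q))
        = ∑ j ∈ range (m-q+1), C q * (cEven j * sOdd (m-q-j)) := by
    intro q hq
    have hq' : q ≤ m := by simpa [Nat.lt_succ] using (mem_range.mp hq)
    have h1 : m - (m-q) = q := by omega
    rw [h1, N1 (m-q), mul_sum]
  rw [sum_congr rfl step1]
  rw [tri_swap (fun q j => C q * (cEven j * sOdd (m-q-j))) m]
  have step2 : ∀ j ∈ range (m+1),
      ∑ q ∈ range (m-j+1), C q * (cEven j * sOdd (m-q-j))
        = cEven j * (if m - j = 0 then 1 else 0) := by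
    intro j _
    have inner : ∑ q ∈ range (m-j+1), C q * (cEven j * sOdd (m-q-j))
        = cEven j * ∑ q ∈ range (m-j+1), C q * sOdd ((m-j)-q) := by
      rw [mul_sum]
      apply sum_congr rfl
      intro q _
      rw [show m - q - j = m - j - q from by omega]
      ring
    rw [inner]
    congr 1
    -- ∑ q ∈ range (m-j+1), C q * sOdd ((m-j)-q) = ite
    rw [← reflect_sum (fun q => C q * sOdd ((m-j)-q)) (m-j)]
    rw [show (∑ q ∈ range (m-j+1), C ((m-j)-q) * sOdd ((m-j)-((m-j)-q)))
        = ∑ q ∈ range (m-j+1), C ((m-j)-q) * sOdd q from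
      sum_congr rfl (by
        intro q hq
        have hq' : q ≤ m - j := by simpa [Nat.lt_succ] using (mem_range.mp hq)
        have h2 : (m-j) - ((m-j)-q) = q := by omega
        rw [h2])]
    exact lemK C hC0 hCrec (m-j)
  rw [sum_congr rfl step2]
  have step3 : ∀ j ∈ range (m+1),
      cEven j * (if m - j = 0 then 1 else 0) = if j = m then cEven j else 0 := by
    intro j hj
    have hj' : j ≤ m := by simpa [Nat.lt_succ] using (mem_range.mp hj)
    by_cases h : j = m
    · subst h; simp
    · rw [if_neg h, if_neg (by omega), mul_zero]
  rw [sum_congr rfl step3, Finset.sum_ite_eq' (range (m+1)) m cEven,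
    if_pos (self_mem_range_succ m)]

lemma lemL4 (C : ℕ → ℚ) (hC0 : C 0 = 1)
    (hCrec : ∀ p : ℕ, 1 ≤ p → ∑ q ∈ Finset.range (p + 1), C (p - q) / (Nat.factorial (2 * q + 1) : ℚ) = 0) (p : ℕ) : ∑ q ∈ range (p+1), SS C (p-q) * sOdd q = cEven p := by
  simp only [SS]
  have step1 : ∀ q ∈ range (p+1),
      (∑ j ∈ range (p-q+1), C (p-q-j) * cEven j) * sOdd q
        = ∑ j ∈ range (p-q+1), C (p-q-j) * cEven j * sOdd q := by
    intro q _; rw [sum_mul]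
  rw [sum_congr rfl step1, tri_swap (fun q j => C (p-q-j) * cEven j * sOdd q) p]
  have step2 : ∀ j ∈ range (p+1),
      ∑ q ∈ range (p-j+1), C (p-q-j) * cEven j * sOdd q
        = cEven j * (if p - j = 0 then 1 else 0) := by
    intro j _
    have inner : ∑ q ∈ range (p-j+1), C (p-q-j) * cEven j * sOdd q
        = cEven j * ∑ q ∈ range (p-j+1), C ((p-j)-q) * sOdd q := by
      rw [mul_sum]
      apply sum_congr rfl
      intro q _
      rw [show p - q - j = p - j - q from by omega]
      ring
    rw [inner, lemK C hC0 hCrec (p-j)]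
  rw [sum_congr rfl step2]
  have step3 : ∀ j ∈ range (p+1),
      cEven j * (if p - j = 0 then 1 else 0) = if j = p then cEven j else 0 := by
    intro j hj
    have hj' : j ≤ p := by simpa [Nat.lt_succ] using (mem_range.mp hj)
    by_cases h : j = p
    · subst h; simp
    · rw [if_neg h, if_neg (by omega), mul_zero]
  rw [sum_congr rfl step3, Finset.sum_ite_eq' (range (p+1)) p cEven,
    if_pos (self_mem_range_succ p)]

lemma lemL5 (C : ℕ → ℚ) (hC0 : C 0 = 1)
    (hCrec : ∀ p : ℕ, 1 ≤ p → ∑ q ∈ Finset.range (p + 1), C (p - q) / (Nat.factorial (2 * q + 1) : ℚ) = 0) (p : ℕ) (hp : 1 ≤ p) :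
    ∑ q ∈ range (p+1), SS C (p-q) * ((4:ℚ)^q * sOdd q) = (4:ℚ)^p/2 * cEven p := by
  simp only [SS]
  have step1 : ∀ q ∈ range (p+1),
      (∑ j ∈ range (p-q+1), C (p-q-j) * cEven j) * ((4:ℚ)^q * sOdd q)
        = ∑ j ∈ range (p-q+1), C (p-q-j) * cEven j * ((4:ℚ)^q * sOdd q) := by
    intro q _; rw [sum_mul]
  rw [sum_congr rfl step1,
    tri_swap (fun q j => C (p-q-j) * cEven j * ((4:ℚ)^q * sOdd q)) p]
  have step2 : ∀ j ∈ range (p+1),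
      ∑ q ∈ range (p-j+1), C (p-q-j) * cEven j * ((4:ℚ)^q * sOdd q)
        = cEven j * cEven (p-j) := by
    intro j _
    have inner : ∑ q ∈ range (p-j+1), C (p-q-j) * cEven j * ((4:ℚ)^q * sOdd q)
        = cEven j * ∑ q ∈ range (p-j+1), C ((p-j)-q) * ((4:ℚ)^q * sOdd q) := by
      rw [mul_sum]
      apply sum_congr rfl
      intro q _
      rw [show p - q - j = p - j - q from by omega]
      ring
    rw [inner, lemL3 C hC0 hCrec (p-j)]
  rw [sum_congr rfl step2]
  exact N2 p hp

lemma mainAux (C : ℕ → ℚ) (hC0 : C 0 = 1)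
    (hCrec : ∀ p : ℕ, 1 ≤ p → ∑ q ∈ Finset.range (p + 1), C (p - q) / (Nat.factorial (2 * q + 1) : ℚ) = 0) : ∀ p : ℕ, 2/(4:ℚ)^p * SS C p = SS C p + C p := by
  intro p
  induction p using Nat.strong_induction_on with
  | _ p ih =>
    rcases Nat.eq_zero_or_pos p with hp0|hp
    · subst hp0
      simp [SS, cEven, hC0, Nat.factorial]
      try ring
    · have hQ : ∑ q ∈ range (p+1),
          (2/(4:ℚ)^(p-q) * SS C (p-q) - SS C (p-q) - C (p-q)) * sOdd q = 0 := by
        have e1 : ∑ q ∈ range (p+1), 2/(4:ℚ)^(p-q) * SS C (p-q) * sOdd q = cEven p := by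
          have hterm : ∀ q ∈ range (p+1), 2/(4:ℚ)^(p-q) * SS C (p-q) * sOdd q
              = 2/(4:ℚ)^p * (SS C (p-q) * ((4:ℚ)^q * sOdd q)) := by
            intro q hq
            have hq' : q ≤ p := by simpa [Nat.lt_succ] using (mem_range.mp hq)
            have h4 : (4:ℚ)^(p-q) * (4:ℚ)^q = (4:ℚ)^p := by
              rw [← pow_add]; congr 1; omega
            have h1 : (4:ℚ)^(p-q) ≠ 0 := by positivity
            have h2 : (4:ℚ)^p ≠ 0 := by positivity
            field_simp
            linear_combination (-1 * SS C (p-q) * sOdd q) * h4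
          rw [sum_congr rfl hterm, ← mul_sum, lemL5 C hC0 hCrec p hp]
          have h2 : (4:ℚ)^p ≠ 0 := by positivity
          field_simp
        have e2 := lemL4 C hC0 hCrec p
        have e3 : ∑ q ∈ range (p+1), C (p-q) * sOdd q = 0 := by
          rw [lemK C hC0 hCrec p, if_neg (by omega)]
        simp only [sub_mul, Finset.sum_sub_distrib]
        rw [e1, e2, e3]
        ring
      rw [Finset.sum_range_succ'] at hQ
      have hz : ∀ i ∈ range p,
          (2/(4:ℚ)^(p-(i+1)) * SS C (p-(i+1)) - SS C (p-(i+1)) - C (p-(i+1))) * sOdd (i+1) = 0 := by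
        intro i _
        have hlt : p - (i+1) < p := by omega
        have h := ih _ hlt
        have hzero : 2/(4:ℚ)^(p-(i+1)) * SS C (p-(i+1)) - SS C (p-(i+1)) - C (p-(i+1)) = 0 := by
          linarith
        rw [hzero, zero_mul]
      rw [sum_congr rfl hz, Finset.sum_const_zero, zero_add] at hQ
      simp only [Nat.sub_zero] at hQ
      have hs0 : sOdd 0 = 1 := by simp [sOdd, Nat.factorial]
      rw [hs0, mul_one] at hQ
      linarith

theorem C_recursion_g (C : ℕ → ℚ) (hC0 : C 0 = 1)
    (hCrec : ∀ p : ℕ, 1 ≤ p → ∑ q ∈ Finset.range (p + 1), C (p - q) / (Nat.factorial (2 * q + 1) : ℚ) = 0) (p : ℕ) (hp : 1 ≤ p) :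
    ∑ q ∈ Finset.range (p + 1), C (p - q) / (Nat.factorial (2 * q) : ℚ) =
      C p / ((2 : ℚ) ^ (1 - 2 * (p : ℤ)) - 1) := by
  have hSS : ∑ q ∈ Finset.range (p + 1), C (p - q) / (Nat.factorial (2 * q) : ℚ) = SS C p := by
    simp only [SS, cEven]
    apply sum_congr rfl
    intro q _
    rw [div_eq_mul_one_div]
  have hM := mainAux C hC0 hCrec p
  have hzp : (2:ℚ)^(1-2*(p:ℤ)) = 2/(4:ℚ)^p := by
    rw [zpow_sub₀ (by norm_num : (2:ℚ) ≠ 0), zpow_one]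
    congr 1
    rw [show (2*(p:ℤ)) = ((2*p : ℕ) : ℤ) by push_cast; ring, zpow_natCast, pow_mul]
    norm_num
  have h4pos : (0:ℚ) < (4:ℚ)^p := by positivity
  have h4 : (4:ℚ) ≤ (4:ℚ)^p := by
    calc (4:ℚ) = 4^1 := (pow_one 4).symm
    _ ≤ 4^p := by apply pow_le_pow_right₀ (by norm_num) hp
  have hne : 2/(4:ℚ)^p - 1 ≠ 0 := by
    intro h
    have h2 : (2:ℚ) = 4^p := by
      field_simp at h
      linarith
    linarith
  rw [hSS, hzp, eq_div_iff hne]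
  linear_combination hM
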